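/- (Hoeffding bound for the binomial tail, as used for the bounded-distance-decoding error probability.) Let n ≥ 1 be an integer, p ∈ [0,1] a real number, and t an integer with 0 ≤ t ≤ n and n·p ≤ t. Then the tail probability P_BDD(n,t,p) = Σ_{j = t+1}^{n} C(n,j) p^j (1−p)^{n−j} satisfies P_BDD(n,t,p) ≤ exp(−2n(t/n − p)²). -/

import Mathlib

open Real

/-- Hoeffding's lemma (MGF form): for `p ∈ [0,1]` and any real `x`,
`p·eˣ + (1−p) ≤ exp(x·p + x²/8)`. -/
lemma hoeff_mgf (p : ℝ) (hp0 : 0 ≤ p) (hp1 : p ≤ 1) (x : ℝ) (hx : 0 ≤ x) :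
    p * Real.exp x + (1 - p) ≤ Real.exp (x * p + x ^ 2 / 8) := by
  have hpos : ∀ y : ℝ, 0 < p * Real.exp y + (1 - p) := by
    intro y
    rcases lt_or_eq_of_le hp1 with h | h
    · nlinarith [Real.exp_pos y, mul_nonneg hp0 (Real.exp_pos y).le]
    · nlinarith [Real.exp_pos y]
  set F : ℝ → ℝ := fun y => y * p + y ^ 2 / 8 - Real.log (p * Real.exp y + (1 - p)) with hF
  set G : ℝ → ℝ := fun y => p + y / 4 - p * Real.exp y / (p * Real.exp y + (1 - p)) with hGdef
  have hGderiv : ∀ y : ℝ, HasDerivAt F (G y) y := by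
    intro y
    have h1 : HasDerivAt (fun y : ℝ => p * Real.exp y + (1 - p)) (p * Real.exp y) y := by
      simpa using ((Real.hasDerivAt_exp y).const_mul p).add_const (1 - p)
    have h2 : HasDerivAt (fun y : ℝ => Real.log (p * Real.exp y + (1 - p)))
        (p * Real.exp y / (p * Real.exp y + (1 - p))) y := h1.log (hpos y).ne'
    have h3 : HasDerivAt (fun y : ℝ => y * p + y ^ 2 / 8) (p + y / 4) y := by
      have := ((hasDerivAt_id y).mul_const p).add
        (((hasDerivAt_pow 2 y)).div_const 8)
      refine this.congr_deriv ?_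
      ring
    exact h3.sub h2
  have hGderiv' : ∀ y : ℝ, HasDerivAt G
      (1 / 4 - p * (1 - p) * Real.exp y / (p * Real.exp y + (1 - p)) ^ 2) y := by
    intro y
    have h1 : HasDerivAt (fun y : ℝ => p * Real.exp y) (p * Real.exp y) y :=
      (Real.hasDerivAt_exp y).const_mul p
    have h2 : HasDerivAt (fun y : ℝ => p * Real.exp y + (1 - p)) (p * Real.exp y) y := by
      simpa using h1.add_const (1 - p)
    have h3 : HasDerivAt (fun y : ℝ => p * Real.exp y / (p * Real.exp y + (1 - p)))
        ((p * Real.exp y * (p * Real.exp y + (1 - p)) - p * Real.exp y * (p * Real.exp y)) /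
          (p * Real.exp y + (1 - p)) ^ 2) y := h1.div h2 (hpos y).ne'
    have h4 : HasDerivAt (fun y : ℝ => p + y / 4) (1 / 4) y := by
      simpa using ((hasDerivAt_id y).div_const 4).const_add p
    have := h4.sub h3
    refine this.congr_deriv ?_
    ring
  -- G' ≥ 0 everywhere
  have hG'nonneg : ∀ y : ℝ,
      0 ≤ 1 / 4 - p * (1 - p) * Real.exp y / (p * Real.exp y + (1 - p)) ^ 2 := by
    intro y
    have h := hpos y
    rw [sub_nonneg, div_le_iff₀ (by positivity)]
    nlinarith [sq_nonneg (p * Real.exp y - (1 - p)), Real.exp_pos y]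
  have hGmono : Monotone G := by
    apply monotone_of_deriv_nonneg
    · exact fun y => (hGderiv' y).differentiableAt
    · intro y
      rw [(hGderiv' y).deriv]
      exact hG'nonneg y
  have hG0 : G 0 = 0 := by
    simp [hGdef]
  have hGnonneg : ∀ y, 0 ≤ y → 0 ≤ G y := fun y hy => hG0 ▸ hGmono hy
  have hFmono : MonotoneOn F (Set.Ici (0 : ℝ)) := by
    apply monotoneOn_of_deriv_nonneg (convex_Ici 0)
    · exact (Differentiable.continuous (fun y => (hGderiv y).differentiableAt)).continuousOn
    · intro y hy
      exact (hGderiv y).differentiableAt.differentiableWithinAt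
    · intro y hy
      rw [(hGderiv y).deriv]
      exact hGnonneg y (le_of_lt (by simpa using hy))
  have hF0 : F 0 = 0 := by
    simp [hF]
  have hFx : 0 ≤ F x := by
    have := hFmono (Set.self_mem_Ici) (Set.mem_Ici.mpr hx) hx
    rwa [hF0] at this
  have hlog : Real.log (p * Real.exp x + (1 - p)) ≤ x * p + x ^ 2 / 8 := by
    simp only [hF] at hFx; linarith
  calc p * Real.exp x + (1 - p)
      = Real.exp (Real.log (p * Real.exp x + (1 - p))) := (Real.exp_log (hpos x)).symm
    _ ≤ Real.exp (x * p + x ^ 2 / 8) := Real.exp_le_exp.mpr hlog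

/-- **Hoeffding bound for the binomial tail.** For `1 ≤ n`, `p ∈ [0,1]`
and an integer `t` with `0 ≤ t ≤ n` and `n·p ≤ t`, the binomial tail probability
`P_BDD(n,t,p) = Σ_{j=t+1}^n C(n,j) pʲ (1−p)^{n−j}` is at most `exp(−2n(t/n − p)²)`. -/
theorem statement11 (n t : ℕ) (hn : 1 ≤ n) (ht : t ≤ n)
    (p : ℝ) (hp0 : 0 ≤ p) (hp1 : p ≤ 1) (hnp : (n : ℝ) * p ≤ t) :
    ∑ j ∈ Finset.Icc (t + 1) n, (n.choose j : ℝ) * p ^ j * (1 - p) ^ (n - j)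
      ≤ Real.exp (-2 * n * ((t : ℝ) / n - p) ^ 2) := by
  have hn0 : (0 : ℝ) < n := by exact_mod_cast hn
  set a : ℝ := (t : ℝ) / n with ha
  have hta : (t : ℝ) = n * a := by rw [ha]; field_simp
  have hap : p ≤ a := by
    rw [ha, le_div_iff₀ hn0]; linarith
  set L : ℝ := 4 * (a - p) with hL
  have hL0 : 0 ≤ L := by nlinarith
  have hq0 : 0 ≤ 1 - p := by linarith
  -- pointwise bound
  have step1 : ∀ j ∈ Finset.Icc (t + 1) n,
      (n.choose j : ℝ) * p ^ j * (1 - p) ^ (n - j)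
        ≤ Real.exp (-(L * t)) * ((p * Real.exp L) ^ j * (1 - p) ^ (n - j) * (n.choose j : ℝ)) := by
    intro j hj
    rw [Finset.mem_Icc] at hj
    have hjt : (t : ℝ) + 1 ≤ j := by exact_mod_cast hj.1
    have h1 : (1 : ℝ) ≤ Real.exp (L * (j - t)) := by
      rw [Real.one_le_exp_iff.symm] at *
      exact Real.one_le_exp (by nlinarith)
    have hterm : 0 ≤ (n.choose j : ℝ) * p ^ j * (1 - p) ^ (n - j) := by positivity
    calc (n.choose j : ℝ) * p ^ j * (1 - p) ^ (n - j)
        ≤ ((n.choose j : ℝ) * p ^ j * (1 - p) ^ (n - j)) * Real.exp (L * (j - t)) := by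
          nlinarith
      _ = Real.exp (-(L * t)) * ((p * Real.exp L) ^ j * (1 - p) ^ (n - j) * (n.choose j : ℝ)) := by
          rw [mul_pow, ← Real.exp_nat_mul]
          rw [show L * ((j : ℝ) - t) = -(L * t) + j * L by ring, Real.exp_add]
          ring
  have step2 : ∑ j ∈ Finset.Icc (t + 1) n, (n.choose j : ℝ) * p ^ j * (1 - p) ^ (n - j)
      ≤ Real.exp (-(L * t)) *
        ∑ j ∈ Finset.range (n + 1), (p * Real.exp L) ^ j * (1 - p) ^ (n - j) * (n.choose j : ℝ) := by
    calc _ ≤ ∑ j ∈ Finset.Icc (t + 1) n,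
          Real.exp (-(L * t)) * ((p * Real.exp L) ^ j * (1 - p) ^ (n - j) * (n.choose j : ℝ)) :=
        Finset.sum_le_sum step1
      _ = Real.exp (-(L * t)) * ∑ j ∈ Finset.Icc (t + 1) n,
          (p * Real.exp L) ^ j * (1 - p) ^ (n - j) * (n.choose j : ℝ) := by
        rw [Finset.mul_sum]
      _ ≤ _ := by
        apply mul_le_mul_of_nonneg_left _ (Real.exp_pos _).le
        apply Finset.sum_le_sum_of_subset_of_nonneg
        · intro j hj
          rw [Finset.mem_Icc] at hj
          exact Finset.mem_range.mpr (Nat.lt_succ_of_le hj.2)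
        · intro j _ _
          have := (Real.exp_pos L).le
          positivity
  rw [← add_pow] at step2
  have hmgf : p * Real.exp L + (1 - p) ≤ Real.exp (L * p + L ^ 2 / 8) :=
    hoeff_mgf p hp0 hp1 L hL0
  have hbase : 0 ≤ p * Real.exp L + (1 - p) := by
    have := (Real.exp_pos L).le
    positivity
  have step3 : (p * Real.exp L + (1 - p)) ^ n ≤ Real.exp (n * (L * p + L ^ 2 / 8)) := by
    calc (p * Real.exp L + (1 - p)) ^ n ≤ Real.exp (L * p + L ^ 2 / 8) ^ n :=
        pow_le_pow_left₀ hbase hmgf n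
      _ = Real.exp (n * (L * p + L ^ 2 / 8)) := by rw [← Real.exp_nat_mul]
  calc ∑ j ∈ Finset.Icc (t + 1) n, (n.choose j : ℝ) * p ^ j * (1 - p) ^ (n - j)
      ≤ Real.exp (-(L * t)) * (p * Real.exp L + (1 - p)) ^ n := step2
    _ ≤ Real.exp (-(L * t)) * Real.exp (n * (L * p + L ^ 2 / 8)) :=
        mul_le_mul_of_nonneg_left step3 (Real.exp_pos _).le
    _ = Real.exp (-(L * t) + n * (L * p + L ^ 2 / 8)) := (Real.exp_add _ _).symm
    _ ≤ Real.exp (-2 * n * (a - p) ^ 2) := by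
        apply Real.exp_le_exp.mpr
        rw [hta, hL]
        ring_nf
        nlinarith [sq_nonneg (a - p)]
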